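/- Let b ≥ 2 be an integer, d ≥ 1 a natural number, and ℓ, ℓ', m natural numbers with m ≤ d, ℓ ≤ d, ℓ' ≤ d. Fix x in the b-ary d-dimensional hypercube (functions Fin d → Fin b) whose Hamming distance from the all-zero vector equals m. Then the number of y in the hypercube with Hamming distance ℓ' from the all-zero vector and Hamming distance ℓ from x equals the sum, over all natural numbers i such that i + ℓ ≥ m, i + ℓ ≥ ℓ', and 2·i ≤ m + ℓ' − ℓ, of C(m, i) · C(m−i, i+ℓ−ℓ') · C(d−m, i+ℓ−m) · (b−2)^(m+ℓ'−ℓ−2i) · (b−1)^(i+ℓ−m), with the convention 0^0 = 1. -/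
import Mathlib

open Finset

namespace HCAux

variable {b d : ℕ} (x : Fin d → Fin b) (z0 : Fin b)

/-- coordinates in the support of `x` where `y` agrees with `x`. -/
def SA (y : Fin d → Fin b) : Finset (Fin d) := {j | x j ≠ z0 ∧ y j = x j}
/-- coordinates in the support of `x` where `y` is zero. -/
def SZ (y : Fin d → Fin b) : Finset (Fin d) := {j | x j ≠ z0 ∧ y j = z0}
/-- coordinates outside the support of `x` where `y` is nonzero. -/
def SK (y : Fin d → Fin b) : Finset (Fin d) := {j | x j = z0 ∧ y j ≠ z0}

def Psi (y : Fin d → Fin b) : Finset (Fin d) × Finset (Fin d) × Finset (Fin d) :=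
  (SA x z0 y, SZ x z0 y, SK x z0 y)

lemma filter_ne_eq (y : Fin d → Fin b) :
    ({j | y j ≠ z0} : Finset (Fin d)) =
      SA x z0 y ∪ (({j | x j ≠ z0} : Finset (Fin d)) \ (SA x z0 y ∪ SZ x z0 y)) ∪ SK x z0 y := by
  ext j
  simp only [SA, SZ, SK, mem_union, mem_sdiff, mem_filter, mem_univ, true_and]
  by_cases h1 : x j = z0 <;> by_cases h2 : y j = z0 <;> simp_all <;> tauto

lemma filter_dist_eq (y : Fin d → Fin b) :
    ({j | x j ≠ y j} : Finset (Fin d)) =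
      SZ x z0 y ∪ (({j | x j ≠ z0} : Finset (Fin d)) \ (SA x z0 y ∪ SZ x z0 y)) ∪ SK x z0 y := by
  ext j
  simp only [SA, SZ, SK, mem_union, mem_sdiff, mem_filter, mem_univ, true_and]
  by_cases h1 : x j = z0 <;> by_cases h2 : y j = z0 <;> subst_eqs <;> simp_all <;> tauto

lemma card_three (A C K : Finset (Fin d)) (hAC : Disjoint A C) (hAK : Disjoint A K)
    (hCK : Disjoint C K) : (A ∪ C ∪ K).card = A.card + C.card + K.card := by
  rw [card_union_of_disjoint, card_union_of_disjoint hAC]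
  exact disjoint_union_left.2 ⟨hAK, hCK⟩

lemma disj_AZ (y : Fin d → Fin b) : Disjoint (SA x z0 y) (SZ x z0 y) := by
  rw [disjoint_left]; intro j hj hj'
  simp only [SA, SZ, mem_filter] at hj hj'
  exact hj.2.1 (hj.2.2 ▸ hj'.2.2)

lemma card_filter_ne (y : Fin d → Fin b) :
    ({j | y j ≠ z0} : Finset (Fin d)).card =
      (SA x z0 y).card + (({j | x j ≠ z0} : Finset (Fin d)) \ (SA x z0 y ∪ SZ x z0 y)).card
        + (SK x z0 y).card := by
  rw [filter_ne_eq x z0 y]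
  apply card_three
  · rw [disjoint_left]; intro j hj hj'
    exact (mem_sdiff.1 hj').2 (mem_union_left _ hj)
  · rw [disjoint_left]; intro j hj hj'
    simp only [SA, SK, mem_filter] at hj hj'
    exact hj.2.1 hj'.2.1
  · rw [disjoint_left]; intro j hj hj'
    simp only [SK, mem_sdiff, mem_filter, mem_univ, true_and] at hj hj'
    exact hj.1 hj'.1

lemma card_filter_dist (y : Fin d → Fin b) :
    ({j | x j ≠ y j} : Finset (Fin d)).card =
      (SZ x z0 y).card + (({j | x j ≠ z0} : Finset (Fin d)) \ (SA x z0 y ∪ SZ x z0 y)).card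
        + (SK x z0 y).card := by
  rw [filter_dist_eq x z0 y]
  apply card_three
  · rw [disjoint_left]; intro j hj hj'
    exact (mem_sdiff.1 hj').2 (mem_union_right _ hj)
  · rw [disjoint_left]; intro j hj hj'
    simp only [SZ, SK, mem_filter] at hj hj'
    exact hj.2.1 hj'.2.1
  · rw [disjoint_left]; intro j hj hj'
    simp only [SK, mem_sdiff, mem_filter, mem_univ, true_and] at hj hj'
    exact hj.1 hj'.1

lemma card_support_split (y : Fin d → Fin b) :
    ({j | x j ≠ z0} : Finset (Fin d)).card =
      (SA x z0 y).card + (SZ x z0 y).card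
        + (({j | x j ≠ z0} : Finset (Fin d)) \ (SA x z0 y ∪ SZ x z0 y)).card := by
  rw [← card_union_of_disjoint (disj_AZ x z0 y), add_comm, card_sdiff_add_card_eq_card]
  intro j hj
  rcases mem_union.1 hj with h | h <;>
    · simp only [SA, SZ, mem_filter, mem_univ, true_and] at h ⊢
      exact h.1


/-- the allowed set of values at coordinate `j` for the fiber over `(A, Z, K)`. -/
def TT (A Z K : Finset (Fin d)) (j : Fin d) : Finset (Fin b) :=
  if j ∈ A then {x j} else if j ∈ Z then {z0}
  else if x j ≠ z0 then univ \ {z0, x j} else if j ∈ K then univ \ {z0} else {z0}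

lemma psi_eq_iff {A Z K : Finset (Fin d)}
    (hA : ∀ j ∈ A, x j ≠ z0) (hZ : ∀ j ∈ Z, x j ≠ z0)
    (hAZ : Disjoint A Z) (hK : ∀ j ∈ K, x j = z0) (y : Fin d → Fin b) :
    Psi x z0 y = (A, Z, K) ↔ ∀ j, y j ∈ TT x z0 A Z K j := by
  rw [Psi, Prod.ext_iff, Prod.ext_iff]
  constructor
  · rintro ⟨h1, h2, h3⟩ j
    dsimp only at h1 h2 h3
    rw [TT]
    split_ifs with c1 c2 c3 c4
    · have : j ∈ SA x z0 y := h1 ▸ c1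
      simp only [SA, mem_filter, mem_univ, true_and] at this
      simp [this.2]
    · have : j ∈ SZ x z0 y := h2 ▸ c2
      simp only [SZ, mem_filter, mem_univ, true_and] at this
      simp [this.2]
    · have e1 : j ∉ SA x z0 y := h1 ▸ c1
      have e2 : j ∉ SZ x z0 y := h2 ▸ c2
      simp only [SA, SZ, mem_filter, mem_univ, true_and, not_and] at e1 e2
      simp [e1 c3, e2 c3]
    · have : j ∈ SK x z0 y := h3 ▸ c4
      simp only [SK, mem_filter, mem_univ, true_and] at this
      simp [this.2]
    · have : j ∉ SK x z0 y := h3 ▸ c4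
      simp only [SK, mem_filter, mem_univ, true_and, not_and] at this
      push_neg at c3
      simpa using this c3
  · intro h
    refine ⟨?_, ?_, ?_⟩ <;> dsimp only
    · ext j
      have := h j
      rw [TT] at this
      simp only [SA, mem_filter, mem_univ, true_and]
      split_ifs at this with c1 c2 c3 c4 <;>
        simp only [mem_singleton, mem_sdiff, mem_univ, true_and, mem_insert,
          not_or] at this
      · exact ⟨fun _ => c1, fun _ => ⟨hA j c1, this⟩⟩
      · constructor
        · rintro ⟨hx1, hx2⟩
          exact absurd (this ▸ hx2) (Ne.symm hx1)
        · intro hj; exact absurd hj c1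
      · exact ⟨fun hc => absurd hc.2 this.2, fun hj => absurd hj c1⟩
      · exact ⟨fun hc => absurd (hK j c4) hc.1, fun hj => absurd hj c1⟩
      · exact ⟨fun hc => absurd (by push_neg at c3; exact c3) hc.1, fun hj => absurd hj c1⟩
    · ext j
      have := h j
      rw [TT] at this
      simp only [SZ, mem_filter, mem_univ, true_and]
      split_ifs at this with c1 c2 c3 c4 <;>
        simp only [mem_singleton, mem_sdiff, mem_univ, true_and, mem_insert,
          not_or] at this
      · constructor
        · rintro ⟨hx1, hx2⟩
          exact absurd (this ▸ hx2) hx1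
        · intro hj; exact absurd hj (disjoint_left.1 hAZ c1)
      · exact ⟨fun _ => c2, fun _ => ⟨hZ j c2, this⟩⟩
      · exact ⟨fun hc => absurd hc.2 this.1, fun hj => absurd hj c2⟩
      · exact ⟨fun hc => absurd (hK j c4) hc.1, fun hj => absurd hj c2⟩
      · exact ⟨fun hc => absurd (by push_neg at c3; exact c3) hc.1, fun hj => absurd hj c2⟩
    · ext j
      have := h j
      rw [TT] at this
      simp only [SK, mem_filter, mem_univ, true_and]
      split_ifs at this with c1 c2 c3 c4 <;>
        simp only [mem_singleton, mem_sdiff, mem_univ, true_and, mem_insert,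
          not_or] at this
      · exact ⟨fun hc => absurd hc.1 (hA j c1), fun hj => absurd (hK j hj) (hA j c1)⟩
      · exact ⟨fun hc => absurd hc.1 (hZ j c2), fun hj => absurd (hK j hj) (hZ j c2)⟩
      · exact ⟨fun hc => absurd hc.1 c3, fun hj => absurd (hK j hj) c3⟩
      · exact ⟨fun _ => c4, fun _ => ⟨hK j c4, this⟩⟩
      · exact ⟨fun hc => absurd this hc.2, fun hj => absurd hj c4⟩


lemma fiber_card (hb : 2 ≤ b) {A Z K : Finset (Fin d)}
    (hA : ∀ j ∈ A, x j ≠ z0) (hZ : ∀ j ∈ Z, x j ≠ z0)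
    (hAZ : Disjoint A Z) (hK : ∀ j ∈ K, x j = z0) :
    (univ.filter fun y => Psi x z0 y = (A, Z, K)).card =
      (b - 2) ^ (({j | x j ≠ z0} : Finset (Fin d)) \ (A ∪ Z)).card * (b - 1) ^ K.card := by
  have he : (univ.filter fun y => Psi x z0 y = (A, Z, K)) = Fintype.piFinset (TT x z0 A Z K) := by
    ext y
    simp only [mem_filter, mem_univ, true_and, Fintype.mem_piFinset]
    exact psi_eq_iff x z0 hA hZ hAZ hK y
  rw [he, Fintype.card_piFinset]
  set S : Finset (Fin d) := ({j | x j ≠ z0} : Finset (Fin d)) with hSdef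
  set C := S \ (A ∪ Z) with hCdef
  have hmemC : ∀ j, j ∈ C ↔ x j ≠ z0 ∧ j ∉ A ∧ j ∉ Z := by
    intro j
    rw [hCdef, mem_sdiff, hSdef, mem_union]
    simp only [mem_filter, mem_univ, true_and, not_or]
  have hb1 : (univ \ {z0} : Finset (Fin b)).card = b - 1 := by
    rw [card_sdiff_of_subset (subset_univ _), card_singleton, Finset.card_fin]
  have hcard : ∀ j, (TT x z0 A Z K j).card =
      if j ∈ C then b - 2 else if j ∈ K then b - 1 else 1 := by
    intro j
    rw [TT]
    by_cases c1 : j ∈ A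
    · have hC : j ∉ C := by rw [hmemC]; tauto
      have hKj : j ∉ K := fun hj => hA j c1 (hK j hj)
      simp [c1, hC, hKj]
    · by_cases c2 : j ∈ Z
      · have hC : j ∉ C := by rw [hmemC]; tauto
        have hKj : j ∉ K := fun hj => hZ j c2 (hK j hj)
        simp [c1, c2, hC, hKj]
      · by_cases c3 : x j = z0
        · have hC : j ∉ C := by rw [hmemC]; tauto
          by_cases c4 : j ∈ K
          · simp [c1, c2, c3, c4, hC, hb1]
          · simp [c1, c2, c3, c4, hC]
        · have hC : j ∈ C := by rw [hmemC]; tauto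
          have hb2 : (univ \ {z0, x j} : Finset (Fin b)).card = b - 2 := by
            rw [card_sdiff_of_subset (subset_univ _), Finset.card_fin,
              card_pair (fun h => c3 h.symm)]
          simp [c1, c2, c3, hC, hb2]
  have hdisj : Disjoint C K := by
    rw [disjoint_left]
    intro j hj hj'
    exact ((hmemC j).1 hj).1 (hK j hj')
  calc ∏ j, (TT x z0 A Z K j).card
      = ∏ j, (if j ∈ C then b - 2 else if j ∈ K then b - 1 else 1) :=
        Finset.prod_congr rfl (fun j _ => hcard j)
    _ = ∏ j ∈ C ∪ K, (if j ∈ C then b - 2 else if j ∈ K then b - 1 else 1) := by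
        refine (Finset.prod_subset (subset_univ _) ?_).symm
        intro j _ hj
        rw [mem_union, not_or] at hj
        rw [if_neg hj.1, if_neg hj.2]
    _ = (∏ j ∈ C, (if j ∈ C then b - 2 else if j ∈ K then b - 1 else 1))
          * ∏ j ∈ K, (if j ∈ C then b - 2 else if j ∈ K then b - 1 else 1) :=
        Finset.prod_union hdisj
    _ = (∏ _j ∈ C, (b - 2)) * ∏ _j ∈ K, (b - 1) := by
        refine congrArg₂ (· * ·) ?_ ?_
        · exact Finset.prod_congr rfl fun j hj => if_pos hj
        · refine Finset.prod_congr rfl fun j hj => ?_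
          rw [if_neg (disjoint_right.1 hdisj hj), if_pos hj]
    _ = (b - 2) ^ C.card * (b - 1) ^ K.card := by rw [prod_const, prod_const]


lemma sum_subsets (U : Finset (Fin d)) (r v : ℕ) :
    ∑ W : Finset (Fin d), (if W ⊆ U ∧ W.card = r then v else 0) = U.card.choose r * v := by
  classical
  rw [← Finset.sum_filter]
  have h : (univ.filter fun W => W ⊆ U ∧ W.card = r) = U.powersetCard r := by
    ext W; simp [Finset.mem_powersetCard]
  rw [h, Finset.sum_const, Finset.card_powersetCard, smul_eq_mul]


lemma main {b d : ℕ} (hb : 2 ≤ b) (ℓ ℓ' m : ℕ) (x : Fin d → Fin b) (z0 : Fin b)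
    (hx : hammingDist x (fun _ => z0) = m) :
    {y : Fin d → Fin b | hammingDist y (fun _ => z0) = ℓ' ∧ hammingDist x y = ℓ}.ncard =
      ∑ i ∈ Finset.range (m + 1),
        if m ≤ i + ℓ ∧ ℓ' ≤ i + ℓ ∧ 2 * i + ℓ ≤ m + ℓ' then
          m.choose i * (m - i).choose (i + ℓ - ℓ') * (d - m).choose (i + ℓ - m) *
            (b - 2) ^ (m + ℓ' - ℓ - 2 * i) * (b - 1) ^ (i + ℓ - m)
        else 0 := by
  classical
  set S : Finset (Fin d) := ({j | x j ≠ z0} : Finset (Fin d)) with hSdef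
  have hS : S.card = m := by rw [← hx]; rfl
  have hmd : m ≤ d := by
    rw [← hS]
    simpa using (card_le_card (subset_univ S))
  have hScompl : Sᶜ.card = d - m := by
    rw [card_compl, hS, Fintype.card_fin]
  have hcompl : ∀ K : Finset (Fin d), (∀ j ∈ K, x j = z0) ↔ K ⊆ Sᶜ := by
    intro K
    constructor
    · intro h j hj
      simp only [hSdef, mem_compl, mem_filter, mem_univ, true_and, not_not]
      exact h j hj
    · intro h j hj
      have := h hj
      simp only [hSdef, mem_compl, mem_filter, mem_univ, true_and, not_not] at this
      exact this
  -- distances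
  have hdist0 : ∀ y : Fin d → Fin b, hammingDist y (fun _ => z0) =
      (SA x z0 y).card + (S \ (SA x z0 y ∪ SZ x z0 y)).card + (SK x z0 y).card := by
    intro y; exact card_filter_ne x z0 y
  have hdist1 : ∀ y : Fin d → Fin b, hammingDist x y =
      (SZ x z0 y).card + (S \ (SA x z0 y ∪ SZ x z0 y)).card + (SK x z0 y).card := by
    intro y; exact card_filter_dist x z0 y
  have hsplit : ∀ y : Fin d → Fin b,
      (SA x z0 y).card + (SZ x z0 y).card + (S \ (SA x z0 y ∪ SZ x z0 y)).card = m := by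
    intro y; rw [← hS]; exact (card_support_split x z0 y).symm
  have hsubA : ∀ y : Fin d → Fin b, SA x z0 y ⊆ S := by
    intro y j hj
    simp only [SA, mem_filter, mem_univ, true_and] at hj
    simp only [hSdef, mem_filter, mem_univ, true_and]
    exact hj.1
  have hsubZ : ∀ y : Fin d → Fin b, SZ x z0 y ⊆ S := by
    intro y j hj
    simp only [SZ, mem_filter, mem_univ, true_and] at hj
    simp only [hSdef, mem_filter, mem_univ, true_and]
    exact hj.1
  have hKz : ∀ y : Fin d → Fin b, ∀ j ∈ SK x z0 y, x j = z0 := by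
    intro y j hj
    simp only [SK, mem_filter, mem_univ, true_and] at hj
    exact hj.1
  -- the finset version of the set
  set F : Finset (Fin d → Fin b) :=
    univ.filter (fun y => hammingDist y (fun _ => z0) = ℓ' ∧ hammingDist x y = ℓ) with hF
  have hncard : {y : Fin d → Fin b |
      hammingDist y (fun _ => z0) = ℓ' ∧ hammingDist x y = ℓ}.ncard = F.card := by
    rw [hF]
    rw [show {y : Fin d → Fin b | hammingDist y (fun _ => z0) = ℓ' ∧ hammingDist x y = ℓ}
        = ↑(univ.filter (fun y : Fin d → Fin b =>
            hammingDist y (fun _ => z0) = ℓ' ∧ hammingDist x y = ℓ)) by ext y; simp]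
    rw [Set.ncard_coe_finset]
  rw [hncard]
  -- the triple predicate
  set P : Finset (Fin d) × Finset (Fin d) × Finset (Fin d) → Prop :=
    fun t => t.1 ⊆ S ∧ t.2.1 ⊆ S ∧ Disjoint t.1 t.2.1 ∧ (∀ j ∈ t.2.2, x j = z0) ∧
      t.2.1.card + ℓ' = t.1.card + ℓ ∧ t.2.2.card + m = t.1.card + ℓ with hP
  set T : Finset (Finset (Fin d) × Finset (Fin d) × Finset (Fin d)) :=
    univ.filter P with hT
  have hmaps : ∀ y ∈ F, Psi x z0 y ∈ T := by
    intro y hy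
    rw [hF, mem_filter] at hy
    obtain ⟨-, h1, h2⟩ := hy
    rw [hT, mem_filter]
    refine ⟨mem_univ _, hsubA y, hsubZ y, disj_AZ x z0 y, hKz y, ?_, ?_⟩
    · have e0 := hdist0 y; have e1 := hdist1 y; have e2 := hsplit y
      rw [h1] at e0; rw [h2] at e1
      simp only [Psi]
      omega
    · have e0 := hdist0 y; have e1 := hdist1 y; have e2 := hsplit y
      rw [h1] at e0; rw [h2] at e1
      simp only [Psi]
      omega
  rw [Finset.card_eq_sum_card_fiberwise hmaps]
  -- fibers over valid triples ignore the F-condition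
  have hfib : ∀ t ∈ T, (F.filter fun y => Psi x z0 y = t) =
      (univ.filter fun y => Psi x z0 y = t) := by
    intro t ht
    rw [hT, mem_filter, hP] at ht
    obtain ⟨-, htA, htZ, htD, htK, htc1, htc2⟩ := ht
    ext y
    simp only [hF, mem_filter, mem_univ, true_and]
    constructor
    · rintro ⟨-, h⟩; exact h
    · intro h
      refine ⟨⟨?_, ?_⟩, h⟩ <;>
      · have e0 := hdist0 y; have e1 := hdist1 y; have e2 := hsplit y
        have hA' : SA x z0 y = t.1 := congrArg Prod.fst h
        have hZ' : SZ x z0 y = t.2.1 := congrArg (fun p => p.2.1) h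
        have hK' : SK x z0 y = t.2.2 := congrArg (fun p => p.2.2) h
        rw [hA', hZ', hK'] at e0 e1
        rw [hA', hZ'] at e2
        omega
  rw [Finset.sum_congr rfl (fun t ht => congrArg Finset.card (hfib t ht))]
  -- compute each fiber's cardinality
  have hfibcard : ∀ t ∈ T, (univ.filter fun y => Psi x z0 y = t).card =
      (b - 2) ^ (S \ (t.1 ∪ t.2.1)).card * (b - 1) ^ t.2.2.card := by
    intro t ht
    rw [hT, mem_filter, hP] at ht
    obtain ⟨-, htA, htZ, htD, htK, -, -⟩ := ht
    have := fiber_card x z0 hb (A := t.1) (Z := t.2.1) (K := t.2.2)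
      (fun j hj => by
        have := htA hj
        simp only [hSdef, mem_filter, mem_univ, true_and] at this
        exact this)
      (fun j hj => by
        have := htZ hj
        simp only [hSdef, mem_filter, mem_univ, true_and] at this
        exact this)
      htD htK
    rw [← this]
  rw [Finset.sum_congr rfl hfibcard]
  -- now a pure sum computation over triples
  rw [hT, Finset.sum_filter]
  simp only [Fintype.sum_prod_type, hP]
  have hstep : ∀ A : Finset (Fin d),
      (∑ Z : Finset (Fin d), ∑ K : Finset (Fin d),
        if A ⊆ S ∧ Z ⊆ S ∧ Disjoint A Z ∧ (∀ j ∈ K, x j = z0) ∧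
            Z.card + ℓ' = A.card + ℓ ∧ K.card + m = A.card + ℓ then
          (b - 2) ^ (S \ (A ∪ Z)).card * (b - 1) ^ K.card
        else 0) =
      if A ⊆ S then
        (if m ≤ A.card + ℓ ∧ ℓ' ≤ A.card + ℓ ∧ 2 * A.card + ℓ ≤ m + ℓ' then
          (m - A.card).choose (A.card + ℓ - ℓ') * (d - m).choose (A.card + ℓ - m) *
            (b - 2) ^ (m + ℓ' - ℓ - 2 * A.card) * (b - 1) ^ (A.card + ℓ - m)
        else 0)
      else 0 := by
    intro A
    by_cases hA : A ⊆ S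
    case neg =>
      rw [if_neg hA]
      exact Finset.sum_eq_zero fun Z _ => Finset.sum_eq_zero fun K _ =>
        if_neg (fun hP' => hA hP'.1)
    rw [if_pos hA]
    have hiA : A.card ≤ m := hS ▸ card_le_card hA
    have hKsum : ∀ Z : Finset (Fin d),
        (∑ K : Finset (Fin d),
          if A ⊆ S ∧ Z ⊆ S ∧ Disjoint A Z ∧ (∀ j ∈ K, x j = z0) ∧
              Z.card + ℓ' = A.card + ℓ ∧ K.card + m = A.card + ℓ then
            (b - 2) ^ (S \ (A ∪ Z)).card * (b - 1) ^ K.card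
          else 0) =
        if Z ⊆ S ∧ Disjoint A Z ∧ Z.card + ℓ' = A.card + ℓ ∧ m ≤ A.card + ℓ then
          (b - 2) ^ (S \ (A ∪ Z)).card *
            ((d - m).choose (A.card + ℓ - m) * (b - 1) ^ (A.card + ℓ - m))
        else 0 := by
      intro Z
      by_cases hZ : Z ⊆ S ∧ Disjoint A Z ∧ Z.card + ℓ' = A.card + ℓ ∧ m ≤ A.card + ℓ
      · rw [if_pos hZ]
        have hpt : ∀ K : Finset (Fin d),
            (if A ⊆ S ∧ Z ⊆ S ∧ Disjoint A Z ∧ (∀ j ∈ K, x j = z0) ∧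
                Z.card + ℓ' = A.card + ℓ ∧ K.card + m = A.card + ℓ then
              (b - 2) ^ (S \ (A ∪ Z)).card * (b - 1) ^ K.card
            else 0) =
            if K ⊆ Sᶜ ∧ K.card = A.card + ℓ - m then
              (b - 2) ^ (S \ (A ∪ Z)).card * (b - 1) ^ (A.card + ℓ - m)
            else 0 := by
          intro K
          by_cases hK : K ⊆ Sᶜ ∧ K.card = A.card + ℓ - m
          · rw [if_pos hK,
              if_pos ⟨hA, hZ.1, hZ.2.1, (hcompl K).2 hK.1, hZ.2.2.1, by omega⟩, hK.2]
          · rw [if_neg hK, if_neg]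
            rintro ⟨-, -, -, h4, -, h6⟩
            exact hK ⟨(hcompl K).1 h4, by omega⟩
        rw [Finset.sum_congr rfl fun K _ => hpt K, sum_subsets Sᶜ (A.card + ℓ - m) _,
          hScompl]
        ring
      · rw [if_neg hZ]
        exact Finset.sum_eq_zero fun K _ => if_neg fun hP' =>
          hZ ⟨hP'.2.1, hP'.2.2.1, hP'.2.2.2.2.1, by omega⟩
    rw [Finset.sum_congr rfl fun Z _ => hKsum Z]
    by_cases hc : m ≤ A.card + ℓ ∧ ℓ' ≤ A.card + ℓ
    · have hpt : ∀ Z : Finset (Fin d),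
          (if Z ⊆ S ∧ Disjoint A Z ∧ Z.card + ℓ' = A.card + ℓ ∧ m ≤ A.card + ℓ then
            (b - 2) ^ (S \ (A ∪ Z)).card *
              ((d - m).choose (A.card + ℓ - m) * (b - 1) ^ (A.card + ℓ - m))
          else 0) =
          if Z ⊆ S \ A ∧ Z.card = A.card + ℓ - ℓ' then
            (b - 2) ^ (m - A.card - (A.card + ℓ - ℓ')) *
              ((d - m).choose (A.card + ℓ - m) * (b - 1) ^ (A.card + ℓ - m))
          else 0 := by
        intro Z
        by_cases hZ : Z ⊆ S \ A ∧ Z.card = A.card + ℓ - ℓ'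
        · have h1 : Z ⊆ S ∧ Disjoint Z A := Finset.subset_sdiff.1 hZ.1
          rw [if_pos hZ, if_pos ⟨h1.1, h1.2.symm, by omega, hc.1⟩]
          have hsd : S \ (A ∪ Z) = (S \ A) \ Z := by
            ext j; simp only [mem_sdiff, mem_union]; tauto
          rw [hsd, card_sdiff_of_subset hZ.1, card_sdiff_of_subset hA, hS, hZ.2]
        · rw [if_neg hZ, if_neg]
          rintro ⟨h1, h2, h3, -⟩
          exact hZ ⟨Finset.subset_sdiff.2 ⟨h1, h2.symm⟩, by omega⟩
      rw [Finset.sum_congr rfl fun Z _ => hpt Z,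
        sum_subsets (S \ A) (A.card + ℓ - ℓ') _, card_sdiff_of_subset hA, hS]
      by_cases h3 : 2 * A.card + ℓ ≤ m + ℓ'
      · rw [if_pos ⟨hc.1, hc.2, h3⟩,
          show m - A.card - (A.card + ℓ - ℓ') = m + ℓ' - ℓ - 2 * A.card by omega]
        ring
      · rw [if_neg (fun hh => h3 hh.2.2),
          Nat.choose_eq_zero_of_lt (show m - A.card < A.card + ℓ - ℓ' by omega), zero_mul]
    · rw [if_neg (fun hh => hc ⟨hh.1, hh.2.1⟩)]
      exact Finset.sum_eq_zero fun Z _ => if_neg fun hZ => hc ⟨hZ.2.2.2, by omega⟩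
  rw [Finset.sum_congr rfl fun A _ => hstep A, ← Finset.sum_filter]
  rw [show (univ.filter fun A : Finset (Fin d) => A ⊆ S) = S.powerset by
    ext A; simp [Finset.mem_powerset]]
  rw [Finset.sum_powerset, hS]
  refine Finset.sum_congr rfl fun i hi => ?_
  have hptA : ∀ A ∈ S.powersetCard i,
      (if m ≤ A.card + ℓ ∧ ℓ' ≤ A.card + ℓ ∧ 2 * A.card + ℓ ≤ m + ℓ' then
        (m - A.card).choose (A.card + ℓ - ℓ') * (d - m).choose (A.card + ℓ - m) *
          (b - 2) ^ (m + ℓ' - ℓ - 2 * A.card) * (b - 1) ^ (A.card + ℓ - m)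
      else 0) =
      (if m ≤ i + ℓ ∧ ℓ' ≤ i + ℓ ∧ 2 * i + ℓ ≤ m + ℓ' then
        (m - i).choose (i + ℓ - ℓ') * (d - m).choose (i + ℓ - m) *
          (b - 2) ^ (m + ℓ' - ℓ - 2 * i) * (b - 1) ^ (i + ℓ - m)
      else 0) := by
    intro A hA
    rw [(Finset.mem_powersetCard.1 hA).2]
  rw [Finset.sum_congr rfl hptA, Finset.sum_const, Finset.card_powersetCard, hS,
    smul_eq_mul]
  split_ifs with h
  · ring
  · ring

end HCAux

/-- Counting vertices of the `b`-ary `d`-dimensional hypercube at prescribed Hamming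
distances: if `x` is at Hamming distance `m` from the all-zero vector, the number of `y`
at distance `ℓ'` from the all-zero vector and distance `ℓ` from `x` is given by an
explicit sum of products of binomial coefficients and powers of `b−2` and `b−1`. -/
theorem hypercube_count_at_distances (b d : ℕ) (hb : 2 ≤ b) (hd : 1 ≤ d)
    (ℓ ℓ' m : ℕ) (hm : m ≤ d) (hℓ : ℓ ≤ d) (hℓ' : ℓ' ≤ d)
    (x : Fin d → Fin b)
    (hx : hammingDist x (fun _ => (⟨0, by omega⟩ : Fin b)) = m) :
    {y : Fin d → Fin b |
        hammingDist y (fun _ => (⟨0, by omega⟩ : Fin b)) = ℓ' ∧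
          hammingDist x y = ℓ}.ncard =
      ∑ i ∈ Finset.range (m + 1),
        if m ≤ i + ℓ ∧ ℓ' ≤ i + ℓ ∧ 2 * i + ℓ ≤ m + ℓ' then
          m.choose i * (m - i).choose (i + ℓ - ℓ') * (d - m).choose (i + ℓ - m) *
            (b - 2) ^ (m + ℓ' - ℓ - 2 * i) * (b - 1) ^ (i + ℓ - m)
        else 0 :=
  HCAux.main hb ℓ ℓ' m x ⟨0, by omega⟩ hx
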